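/- Golomb's arithmetic formula: for all natural numbers m > 1 and n > 1 with gcd(m, n) = 1, one has ∑_{d | mn} μ(d) (log d)² = 2 Λ(m) Λ(n), where μ is the Möbius function and Λ is the von Mangoldt function. -/

import Mathlib

open ArithmeticFunction ArithmeticFunction.Moebius Finset

lemma golomb_sum_divisors_coprime (f : ℕ → ℝ) {m n : ℕ} (hm : m ≠ 0) (hn : n ≠ 0)
    (hmn : Nat.Coprime m n) :
    ∑ d ∈ (m * n).divisors, f d = ∑ p ∈ m.divisors ×ˢ n.divisors, f (p.1 * p.2) := by
  refine Finset.sum_nbij' (fun d => (d.gcd m, d.gcd n)) (fun p => p.1 * p.2) ?_ ?_ ?_ ?_ ?_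
  · intro d hd
    rw [Nat.mem_divisors] at hd
    simp only [Finset.mem_product, Nat.mem_divisors]
    exact ⟨⟨Nat.gcd_dvd_right _ _, hm⟩, ⟨Nat.gcd_dvd_right _ _, hn⟩⟩
  · rintro ⟨d1, d2⟩ hp
    simp only [Finset.mem_product, Nat.mem_divisors] at hp
    exact Nat.mem_divisors.mpr ⟨mul_dvd_mul hp.1.1 hp.2.1, mul_ne_zero hm hn⟩
  · intro d hd
    rw [Nat.mem_divisors] at hd
    have : d.gcd (m * n) = d := Nat.gcd_eq_left hd.1
    rw [Nat.Coprime.gcd_mul _ hmn] at this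
    simpa using this
  · rintro ⟨d1, d2⟩ hp
    simp only [Finset.mem_product, Nat.mem_divisors] at hp
    have h1 : d2.Coprime m := Nat.Coprime.coprime_dvd_left hp.2.1 hmn.symm
    have h2 : d1.Coprime n := Nat.Coprime.coprime_dvd_left hp.1.1 hmn
    have e1 : (d1 * d2).gcd m = d1 := by
      rw [Nat.Coprime.gcd_mul_right_cancel _ h1]
      exact Nat.gcd_eq_left hp.1.1
    have e2 : (d1 * d2).gcd n = d2 := by
      rw [mul_comm, Nat.Coprime.gcd_mul_right_cancel _ h2]
      exact Nat.gcd_eq_left hp.2.1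
    simp [e1, e2]
  · intro d hd
    rw [Nat.mem_divisors] at hd
    have : d.gcd (m * n) = d := Nat.gcd_eq_left hd.1
    rw [Nat.Coprime.gcd_mul _ hmn] at this
    show f d = f (d.gcd m * d.gcd n)
    rw [this]

lemma golomb_sum_moebius_eq_zero {m : ℕ} (hm : 1 < m) :
    ∑ d ∈ m.divisors, (μ d : ℝ) = 0 := by
  have h := congrArg (fun f : ArithmeticFunction ℤ => f m) moebius_mul_coe_zeta
  simp only [coe_mul_zeta_apply, one_apply, if_neg (by omega : m ≠ 1)] at h
  have : ((∑ d ∈ m.divisors, μ d : ℤ) : ℝ) = 0 := by rw [h]; norm_num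
  rw [← this]
  push_cast
  ring

open ArithmeticFunction ArithmeticFunction.Moebius in
/-- Golomb's arithmetic formula: for coprime `m, n > 1`,
`∑_{d ∣ mn} μ(d) (log d)² = 2 Λ(m) Λ(n)`. -/
theorem golomb_formula (m n : ℕ) (hm : 1 < m) (hn : 1 < n) (hmn : Nat.gcd m n = 1) :
    ∑ d ∈ (m * n).divisors, (μ d : ℝ) * Real.log d ^ 2 = 2 * Λ m * Λ n := by
  have hco : Nat.Coprime m n := hmn
  rw [golomb_sum_divisors_coprime _ (by omega) (by omega) hco, Finset.sum_product]
  have key : ∀ d1 ∈ m.divisors, ∀ d2 ∈ n.divisors,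
      (μ (d1 * d2) : ℝ) * Real.log ((d1 * d2 : ℕ) : ℝ) ^ 2 =
      ((μ d1 : ℝ) * Real.log d1 ^ 2) * (μ d2 : ℝ)
      + 2 * ((μ d1 : ℝ) * Real.log d1) * ((μ d2 : ℝ) * Real.log d2)
      + (μ d1 : ℝ) * ((μ d2 : ℝ) * Real.log d2 ^ 2) := by
    intro d1 h1 d2 h2
    rw [Nat.mem_divisors] at h1 h2
    have hc : d1.Coprime d2 :=
      Nat.Coprime.coprime_dvd_left h1.1 (Nat.Coprime.coprime_dvd_right h2.1 hco)
    have hmu : (μ (d1 * d2) : ℝ) = (μ d1 : ℝ) * (μ d2 : ℝ) := by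
      rw [isMultiplicative_moebius.map_mul_of_coprime hc]; push_cast; ring
    have hd1 : (d1 : ℝ) ≠ 0 := by
      exact_mod_cast Nat.pos_of_dvd_of_pos h1.1 (by omega) |>.ne'
    have hd2 : (d2 : ℝ) ≠ 0 := by
      exact_mod_cast Nat.pos_of_dvd_of_pos h2.1 (by omega) |>.ne'
    have hlog : Real.log ((d1 * d2 : ℕ) : ℝ) = Real.log d1 + Real.log d2 := by
      push_cast
      exact Real.log_mul hd1 hd2
    rw [hmu, hlog]
    ring
  refine Eq.trans (Finset.sum_congr rfl fun d1 h1 =>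
    Finset.sum_congr rfl fun d2 h2 => key d1 h1 d2 h2) ?_
  simp only [Finset.sum_add_distrib, ← Finset.sum_mul, ← Finset.mul_sum]
  rw [golomb_sum_moebius_eq_zero hm, golomb_sum_moebius_eq_zero hn]
  simp only [← ArithmeticFunction.log_apply, sum_moebius_mul_log_eq]
  ring
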